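/- Let Y be a real Banach space with K ⊆ Y a finite dimensional proper cone, G be continuous on A, H be continuously Fréchet differentiable on A, and suppose there exists c ≥ 0 such that the penalty function Φ_c(x) = f₀(x) + c·dist(F(x), −K) is coercive on A. Let t₀ ≻_{K*} 0. For z ∈ ℝ^d write F_z(x) = G(x) − H(z) − DH(z)(x − z) and let M_z(x) = F_z(x) + K for x ∈ A and M_z(x) = ∅ otherwise. Let 𝒟₀ be a nonempty set of points z ∈ A for which the feasible region {x ∈ A : F_z(x) ⪯_K 0} is nonempty, and suppose there exist a > 0, L_g > 0, L_h > 0 such that for every z ∈ 𝒟₀ and v ∈ ∂h₀(z): ‖v‖ ≤ L_h, and there exist r > 0 and a globally optimal solution x* of the non-penalized problem (minimize g₀(x) − ⟨v, x − z⟩ subject to F_z(x) ⪯_K 0, x ∈ A) such that g₀ is Lipschitz continuous near x* with constant L_g and dist(F_z(x), −K) ≥ a·dist(x, M_z^{-1}(0)) for all x ∈ B(x*, r) ∩ A. Then there exists μ* ≥ 0 such that for all μ ≥ μ*, all z ∈ 𝒟₀, and all v ∈ ∂h₀(z), the penalized problem — minimize over (x, s) the function g₀(x) − ⟨v, x − z⟩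 + μ⟨t₀, s⟩ subject to F_z(x) ⪯_K s, s ⪰_K 0, x ∈ A — has a globally optimal solution, and a pair (x*, s*) is a globally optimal solution of this penalized problem if and only if s* = 0 and x* is a globally optimal solution of the corresponding non-penalized problem. -/
import Mathlib


open scoped RealInnerProductSpace Pointwise

/-- A function with values in a space ordered by a cone `K` is `K`-convex if
`Φ(αx₁ + (1−α)x₂) ⪯_K αΦ(x₁) + (1−α)Φ(x₂)` for all `x₁, x₂` and `α ∈ [0,1]`. -/
def KConvex {X Y : Type*} [AddCommGroup X] [Module ℝ X] [AddCommGroup Y] [Module ℝ Y]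
    (K : Set Y) (Φ : X → Y) : Prop :=
  ∀ (x₁ x₂ : X) (α : ℝ), α ∈ Set.Icc (0 : ℝ) 1 →
    α • Φ x₁ + (1 - α) • Φ x₂ - Φ (α • x₁ + (1 - α) • x₂) ∈ K

/-- The subdifferential of a convex function `φ : ℝ^d → ℝ` at a point `x`. -/
def subdiff {d : ℕ} (φ : EuclideanSpace ℝ (Fin d) → ℝ) (x : EuclideanSpace ℝ (Fin d)) :
    Set (EuclideanSpace ℝ (Fin d)) :=
  {w | ∀ y, φ x + ⟪w, y - x⟫ ≤ φ y}


section Helpers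

variable {Y : Type*} [NormedAddCommGroup Y] [NormedSpace ℝ Y]

lemma my_exists_eps (K : Set Y) (hKclosed : IsClosed K)
    (hKcone : ∀ c : ℝ, 0 ≤ c → ∀ y ∈ K, c • y ∈ K)
    (hKfd : FiniteDimensional ℝ (Submodule.span ℝ K))
    (t₀ : Y →L[ℝ] ℝ) (ht₀pos : ∀ y ∈ K, y ≠ 0 → 0 < t₀ y) :
    ∃ ε > (0:ℝ), ∀ y ∈ K, ε * ‖y‖ ≤ t₀ y := by
  by_cases hK : ∀ y ∈ K, y = (0:Y)
  · exact ⟨1, one_pos, fun y hy => by simp [hK y hy]⟩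
  push_neg at hK
  obtain ⟨y₀, hy₀K, hy₀⟩ := hK
  haveI := hKfd
  haveI : ProperSpace (Submodule.span ℝ K) := FiniteDimensional.proper ℝ _
  set T : Set (Submodule.span ℝ K) := {y | (y : Y) ∈ K ∧ ‖(y : Y)‖ = 1} with hT
  have hTsub : T ⊆ Metric.closedBall 0 1 := by
    intro y hy
    have hnn : ‖y‖ = ‖(y : Y)‖ := rfl
    simp only [Metric.mem_closedBall, dist_zero_right, hnn, hy.2, le_refl]
  have hTclosed : IsClosed T :=
    IsClosed.inter (hKclosed.preimage continuous_subtype_val)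
      (isClosed_eq (continuous_norm.comp continuous_subtype_val) continuous_const)
  have hTcp : IsCompact T :=
    IsCompact.of_isClosed_subset (isCompact_closedBall 0 1) hTclosed hTsub
  have hTne : T.Nonempty := by
    refine ⟨⟨‖y₀‖⁻¹ • y₀, Submodule.smul_mem _ _ (Submodule.subset_span hy₀K)⟩, ?_, ?_⟩
    · exact hKcone _ (by positivity) _ hy₀K
    · rw [norm_smul, norm_inv, norm_norm, inv_mul_cancel₀ (norm_ne_zero_iff.2 hy₀)]
  obtain ⟨u, huT, hu⟩ := hTcp.exists_isMinOn hTne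
    ((t₀.continuous.comp continuous_subtype_val).continuousOn)
  have hune : (u : Y) ≠ 0 := by
    intro h
    have := huT.2
    rw [h, norm_zero] at this
    exact one_ne_zero this.symm
  refine ⟨t₀ u, ht₀pos _ huT.1 hune, ?_⟩
  intro y hy
  rcases eq_or_ne y 0 with rfl | hne
  · simp
  · have hyE : y ∈ Submodule.span ℝ K := Submodule.subset_span hy
    have hn : 0 < ‖y‖ := norm_pos_iff.2 hne
    have hw : (⟨‖y‖⁻¹ • y, Submodule.smul_mem _ _ hyE⟩ : Submodule.span ℝ K) ∈ T := by
      refine ⟨hKcone _ (by positivity) _ hy, ?_⟩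
      show ‖‖y‖⁻¹ • y‖ = 1
      rw [norm_smul, norm_inv, norm_norm, inv_mul_cancel₀ (norm_ne_zero_iff.2 hne)]
    have hmin : t₀ (u : Y) ≤
        t₀ ((⟨‖y‖⁻¹ • y, Submodule.smul_mem _ _ hyE⟩ : Submodule.span ℝ K) : Y) := hu hw
    have h1 : t₀ (u : Y) ≤ ‖y‖⁻¹ * t₀ y := by
      have heq : t₀ ((⟨‖y‖⁻¹ • y, Submodule.smul_mem _ _ hyE⟩ : Submodule.span ℝ K) : Y)
          = ‖y‖⁻¹ * t₀ y := by
        show t₀ (‖y‖⁻¹ • y) = ‖y‖⁻¹ * t₀ y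
        rw [map_smul, smul_eq_mul]
      rw [heq] at hmin
      exact hmin
    calc t₀ (u : Y) * ‖y‖ ≤ (‖y‖⁻¹ * t₀ y) * ‖y‖ := mul_le_mul_of_nonneg_right h1 hn.le
      _ = t₀ y := by field_simp

lemma my_infDist_le_add_mem (K : Set Y) (h0K : (0:Y) ∈ K)
    (hKadd : ∀ k₁ ∈ K, ∀ k₂ ∈ K, k₁ + k₂ ∈ K)
    (y : Y) {k : Y} (hk : k ∈ K) :
    Metric.infDist y (-K) ≤ Metric.infDist (y + k) (-K) := by
  have hne : (-K).Nonempty := ⟨0, by simpa using h0K⟩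
  by_contra hcon
  push_neg at hcon
  obtain ⟨w, hw, hlt⟩ := (Metric.infDist_lt_iff hne).1 hcon
  have hw' : w - k ∈ -K := by
    rw [Set.mem_neg] at hw ⊢
    have h := hKadd _ hw _ hk
    rwa [show -(w - k) = -w + k by abel]
  have h1 : Metric.infDist y (-K) ≤ dist y (w - k) := Metric.infDist_le_dist_of_mem hw'
  have h2 : dist y (w - k) = dist (y + k) w := by
    rw [dist_eq_norm, dist_eq_norm]
    congr 1
    abel
  linarith

lemma my_infDist_combo {T : Set Y} (hT : Convex ℝ T) (hne : T.Nonempty)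
    (y₁ y₂ : Y) (p q : ℝ) (hp : 0 ≤ p) (hq : 0 ≤ q) (hpq : p + q = 1) :
    Metric.infDist (p • y₁ + q • y₂) T ≤ p * Metric.infDist y₁ T + q * Metric.infDist y₂ T := by
  refine le_of_forall_pos_le_add fun η hη => ?_
  obtain ⟨w₁, hw₁, hd₁⟩ := (Metric.infDist_lt_iff hne).1
    (show Metric.infDist y₁ T < Metric.infDist y₁ T + η by linarith)
  obtain ⟨w₂, hw₂, hd₂⟩ := (Metric.infDist_lt_iff hne).1
    (show Metric.infDist y₂ T < Metric.infDist y₂ T + η by linarith)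
  have hwT : p • w₁ + q • w₂ ∈ T := hT hw₁ hw₂ hp hq hpq
  have h1 : Metric.infDist (p • y₁ + q • y₂) T ≤ dist (p • y₁ + q • y₂) (p • w₁ + q • w₂) :=
    Metric.infDist_le_dist_of_mem hwT
  have h2 : dist (p • y₁ + q • y₂) (p • w₁ + q • w₂) ≤ p * dist y₁ w₁ + q * dist y₂ w₂ := by
    rw [dist_eq_norm, dist_eq_norm, dist_eq_norm]
    calc ‖(p • y₁ + q • y₂) - (p • w₁ + q • w₂)‖ = ‖p • (y₁ - w₁) + q • (y₂ - w₂)‖ := by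
          congr 1; module
      _ ≤ ‖p • (y₁ - w₁)‖ + ‖q • (y₂ - w₂)‖ := norm_add_le _ _
      _ = p * ‖y₁ - w₁‖ + q * ‖y₂ - w₂‖ := by
          rw [norm_smul, norm_smul, Real.norm_eq_abs, Real.norm_eq_abs,
            abs_of_nonneg hp, abs_of_nonneg hq]
  have h3 : p * dist y₁ w₁ ≤ p * (Metric.infDist y₁ T + η) :=
    mul_le_mul_of_nonneg_left hd₁.le hp
  have h4 : q * dist y₂ w₂ ≤ q * (Metric.infDist y₂ T + η) :=
    mul_le_mul_of_nonneg_left hd₂.le hq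
  have h5 : p * η + q * η = η := by rw [← add_mul, hpq, one_mul]
  nlinarith [h1, h2, h3, h4, h5]

end Helpers

lemma my_key_lemma {d : ℕ} {Y : Type*} [NormedAddCommGroup Y] [NormedSpace ℝ Y]
    (K : Set Y) (hKconvex : Convex ℝ K) (h0K : (0:Y) ∈ K)
    (hKadd : ∀ k₁ ∈ K, ∀ k₂ ∈ K, k₁ + k₂ ∈ K)
    (Φ : EuclideanSpace ℝ (Fin d) → Y)
    (hΦ : ∀ (x₁ x₂ : EuclideanSpace ℝ (Fin d)) (p : ℝ), 0 ≤ p → p ≤ 1 →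
      p • Φ x₁ + (1 - p) • Φ x₂ - Φ (p • x₁ + (1 - p) • x₂) ∈ K)
    (g₀ : EuclideanSpace ℝ (Fin d) → ℝ) (hg₀ : ConvexOn ℝ Set.univ g₀)
    (A : Set (EuclideanSpace ℝ (Fin d))) (hAconvex : Convex ℝ A)
    (v z : EuclideanSpace ℝ (Fin d))
    (a Lg Lh β : ℝ) (ha : 0 < a) (hLg : 0 < Lg) (hLh : 0 < Lh)
    (hβ0 : 0 ≤ β) (hβa : Lg + Lh ≤ β * a)
    (hvLh : ‖v‖ ≤ Lh)
    (r : ℝ) (hr : 0 < r) (xh : EuclideanSpace ℝ (Fin d))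
    (hxhA : xh ∈ A) (hxhF : -Φ xh ∈ K)
    (hxhopt : ∀ y, y ∈ A → -Φ y ∈ K → g₀ xh - ⟪v, xh - z⟫ ≤ g₀ y - ⟪v, y - z⟫)
    (ρ : ℝ) (hρ : 0 < ρ)
    (hlip : ∀ y₁ ∈ Metric.ball xh ρ, ∀ y₂ ∈ Metric.ball xh ρ, |g₀ y₁ - g₀ y₂| ≤ Lg * ‖y₁ - y₂‖)
    (heb : ∀ x ∈ Metric.closedBall xh r ∩ A,
      a * Metric.infDist x {x' | x' ∈ A ∧ -Φ x' ∈ K} ≤ Metric.infDist (Φ x) (-K))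
    (x : EuclideanSpace ℝ (Fin d)) (hx : x ∈ A) :
    g₀ xh - ⟪v, xh - z⟫ ≤ g₀ x - ⟪v, x - z⟫ + β * Metric.infDist (Φ x) (-K) := by
  set S : Set (EuclideanSpace ℝ (Fin d)) := {x' | x' ∈ A ∧ -Φ x' ∈ K} with hSdef
  have hSne : S.Nonempty := ⟨xh, hxhA, hxhF⟩
  set δ : ℝ := min r (ρ / 4) with hδdef
  have hδ : 0 < δ := lt_min hr (by linarith)
  have hδρ : δ ≤ ρ / 4 := min_le_right _ _
  set θ : EuclideanSpace ℝ (Fin d) → ℝ :=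
    fun x => g₀ x - ⟪v, x - z⟫ + β * Metric.infDist (Φ x) (-K) with hθdef
  have hθxh0 : Metric.infDist (Φ xh) (-K) = 0 :=
    Metric.infDist_zero_of_mem (Set.mem_neg.2 hxhF)
  -- convexity of θ
  have hθconv : ∀ (x₁ x₂ : EuclideanSpace ℝ (Fin d)) (p q : ℝ), 0 ≤ p → 0 ≤ q → p + q = 1 →
      θ (p • x₁ + q • x₂) ≤ p * θ x₁ + q * θ x₂ := by
    intro x₁ x₂ p q hp hq hpq
    have hq1 : q = 1 - p := by linarith
    subst hq1
    have hg := hg₀.2 (Set.mem_univ x₁) (Set.mem_univ x₂) hp hq hpq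
    rw [smul_eq_mul, smul_eq_mul] at hg
    have hinner : ⟪v, (p • x₁ + (1 - p) • x₂) - z⟫
        = p * ⟪v, x₁ - z⟫ + (1 - p) * ⟪v, x₂ - z⟫ := by
      have he : (p • x₁ + (1 - p) • x₂) - z = p • (x₁ - z) + (1 - p) • (x₂ - z) := by module
      rw [he, inner_add_right, real_inner_smul_right, real_inner_smul_right]
    have hdist : Metric.infDist (Φ (p • x₁ + (1 - p) • x₂)) (-K)
        ≤ p * Metric.infDist (Φ x₁) (-K) + (1 - p) * Metric.infDist (Φ x₂) (-K) := by
      have hp1 : p ≤ 1 := by linarith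
      have hk := hΦ x₁ x₂ p hp hp1
      have h1 : Metric.infDist (Φ (p • x₁ + (1 - p) • x₂)) (-K)
          ≤ Metric.infDist (p • Φ x₁ + (1 - p) • Φ x₂) (-K) := by
        have hmono := my_infDist_le_add_mem K h0K hKadd (Φ (p • x₁ + (1 - p) • x₂)) hk
        have he : Φ (p • x₁ + (1 - p) • x₂)
            + (p • Φ x₁ + (1 - p) • Φ x₂ - Φ (p • x₁ + (1 - p) • x₂))
            = p • Φ x₁ + (1 - p) • Φ x₂ := by abel
        rwa [he] at hmono
      exact h1.trans (my_infDist_combo hKconvex.neg ⟨0, by simpa using h0K⟩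
        _ _ p (1 - p) hp (by linarith) (by ring))
    simp only [hθdef]
    rw [hinner]
    have hβd := mul_le_mul_of_nonneg_left hdist hβ0
    nlinarith [hg, hβd]
  -- local minimality
  have hloc : ∀ x' ∈ A, dist x' xh ≤ δ → θ xh ≤ θ x' := by
    intro x hxA hxd
    have heb' : a * Metric.infDist x S ≤ Metric.infDist (Φ x) (-K) :=
      heb x ⟨Metric.mem_closedBall.2 (hxd.trans (min_le_left _ _)), hxA⟩
    refine le_of_forall_pos_le_add fun ηε hηε => ?_
    set η : ℝ := min (ηε / (Lg + Lh)) δ with hηdef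
    have hη : 0 < η := lt_min (div_pos hηε (by linarith)) hδ
    have hηδ : η ≤ δ := min_le_right _ _
    have hη2 : (Lg + Lh) * η ≤ ηε := by
      have h := min_le_left (ηε / (Lg + Lh)) δ
      rw [← hηdef] at h
      rw [le_div_iff₀ (by linarith : (0:ℝ) < Lg + Lh)] at h
      linarith
    obtain ⟨x', hx'S, hx'd⟩ := (Metric.infDist_lt_iff hSne).1
      (show Metric.infDist x S < Metric.infDist x S + η from lt_add_of_pos_right _ hη)
    have hdS : Metric.infDist x S ≤ δ :=
      (Metric.infDist_le_dist_of_mem (show xh ∈ S from ⟨hxhA, hxhF⟩)).trans hxd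
    have hx'ball : x' ∈ Metric.ball xh ρ := by
      have h1 : dist x' xh ≤ dist x' x + dist x xh := dist_triangle _ _ _
      have h2 : dist x' x < δ + η := by rw [dist_comm]; linarith
      exact Metric.mem_ball.2 (by linarith)
    have hxball : x ∈ Metric.ball xh ρ := Metric.mem_ball.2 (by linarith)
    have hlip' := hlip x hxball x' hx'ball
    have h1 : g₀ x' - g₀ x ≤ Lg * ‖x - x'‖ := by
      have h := abs_le.1 hlip'
      linarith [h.1]
    have h2 : ⟪v, x - z⟫ - ⟪v, x' - z⟫ ≤ Lh * ‖x - x'‖ := by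
      have he : ⟪v, x - z⟫ - ⟪v, x' - z⟫ = ⟪v, x - x'⟫ := by
        rw [← inner_sub_right]
        congr 1
        abel
      rw [he]
      calc ⟪v, x - x'⟫ ≤ ‖v‖ * ‖x - x'‖ := real_inner_le_norm _ _
        _ ≤ Lh * ‖x - x'‖ := mul_le_mul_of_nonneg_right hvLh (norm_nonneg _)
    have h3 : ‖x - x'‖ = dist x x' := (dist_eq_norm _ _).symm
    have h4 : (Lg + Lh) * (‖x - x'‖ - η) ≤ β * Metric.infDist (Φ x) (-K) := by
      have i1 : (Lg + Lh) * (‖x - x'‖ - η) ≤ (Lg + Lh) * Metric.infDist x S := by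
        apply mul_le_mul_of_nonneg_left _ (by linarith)
        rw [h3]; linarith
      have i2 : (Lg + Lh) * Metric.infDist x S ≤ (β * a) * Metric.infDist x S :=
        mul_le_mul_of_nonneg_right hβa Metric.infDist_nonneg
      have i3 : (β * a) * Metric.infDist x S ≤ β * Metric.infDist (Φ x) (-K) := by
        have h := mul_le_mul_of_nonneg_left heb' hβ0
        calc (β * a) * Metric.infDist x S = β * (a * Metric.infDist x S) := by ring
          _ ≤ β * Metric.infDist (Φ x) (-K) := h
      linarith
    have h5 := hxhopt x' hx'S.1 hx'S.2
    simp only [hθdef]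
    rw [hθxh0]
    nlinarith [h1, h2, h4, h5, hη2]
  -- global minimality by convexity
  have hglob : ∀ x' ∈ A, θ xh ≤ θ x' := by
    intro x hxA
    rcases eq_or_ne x xh with rfl | hne
    · exact le_rfl
    · have hn : 0 < ‖x - xh‖ := norm_pos_iff.2 (sub_ne_zero.2 hne)
      set t : ℝ := min 1 (δ / ‖x - xh‖) with htdef
      have ht0 : 0 < t := lt_min one_pos (div_pos hδ hn)
      have ht1 : t ≤ 1 := min_le_left _ _
      have hxtA : xh + t • (x - xh) ∈ A := by
        have hm := hAconvex hxhA hxA (by linarith : (0:ℝ) ≤ 1 - t) ht0.le (by ring)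
        have he : (1 - t) • xh + t • x = xh + t • (x - xh) := by module
        rwa [he] at hm
      have hxtd : dist (xh + t • (x - xh)) xh ≤ δ := by
        rw [dist_eq_norm]
        have he : xh + t • (x - xh) - xh = t • (x - xh) := by abel
        rw [he, norm_smul, Real.norm_eq_abs, abs_of_pos ht0]
        have htle : t ≤ δ / ‖x - xh‖ := min_le_right _ _
        calc t * ‖x - xh‖ ≤ (δ / ‖x - xh‖) * ‖x - xh‖ :=
              mul_le_mul_of_nonneg_right htle (norm_nonneg _)
          _ = δ := div_mul_cancel₀ _ (ne_of_gt hn)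
      have hl := hloc _ hxtA hxtd
      have hc : θ (xh + t • (x - xh)) ≤ (1 - t) * θ xh + t * θ x := by
        have he : xh + t • (x - xh) = (1 - t) • xh + t • x := by module
        rw [he]
        exact hθconv xh x (1 - t) t (by linarith) ht0.le (by ring)
      by_contra hcon
      push_neg at hcon
      have hmul : t * θ x < t * θ xh := mul_lt_mul_of_pos_left hcon ht0
      have := hl.trans hc
      linarith
  have hfin := hglob x hx
  simp only [hθdef] at hfin
  rw [hθxh0] at hfin
  linarith

theorem stmt_17 {d : ℕ} {Y : Type*}
    [NormedAddCommGroup Y] [NormedSpace ℝ Y] [CompleteSpace Y]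
    (K : Set Y) (hKclosed : IsClosed K) (hKconvex : Convex ℝ K)
    (hKcone : ∀ c : ℝ, 0 ≤ c → ∀ y ∈ K, c • y ∈ K)
    (hKpointed : K ∩ (-K) = {0})
    -- K is finite dimensional
    (hKfd : FiniteDimensional ℝ (Submodule.span ℝ K))
    (g₀ h₀ : EuclideanSpace ℝ (Fin d) → ℝ)
    (hg₀ : ConvexOn ℝ Set.univ g₀) (hh₀ : ConvexOn ℝ Set.univ h₀)
    (G H : EuclideanSpace ℝ (Fin d) → Y)
    (hG : KConvex K G) (hH : KConvex K H)
    (A : Set (EuclideanSpace ℝ (Fin d))) (hAclosed : IsClosed A) (hAconvex : Convex ℝ A)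
    -- G is continuous on A, H is continuously Fréchet differentiable on A
    (hGcont : ContinuousOn G A)
    (DH : EuclideanSpace ℝ (Fin d) → EuclideanSpace ℝ (Fin d) →L[ℝ] Y)
    (hHdiff : ∀ p ∈ A, HasFDerivAt H (DH p) p)
    (hDHcont : ContinuousOn DH A)
    -- the penalty function Φ_c is coercive on A for some c ≥ 0
    (c : ℝ) (hc : 0 ≤ c)
    (hcoercive : ∀ xs : ℕ → EuclideanSpace ℝ (Fin d), (∀ n, xs n ∈ A) →
      Filter.Tendsto (fun n => ‖xs n‖) Filter.atTop Filter.atTop →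
      Filter.Tendsto
        (fun n => g₀ (xs n) - h₀ (xs n) + c * Metric.infDist (G (xs n) - H (xs n)) (-K))
        Filter.atTop Filter.atTop)
    -- t₀ ≻_{K*} 0
    (t₀ : Y →L[ℝ] ℝ) (ht₀ : ∀ y ∈ K, 0 ≤ t₀ y) (ht₀pos : ∀ y ∈ K, y ≠ 0 → 0 < t₀ y)
    -- 𝒟₀ is a nonempty set of points of A with nonempty linearized feasible region
    (D₀ : Set (EuclideanSpace ℝ (Fin d))) (hD₀ne : D₀.Nonempty)
    (hD₀ : ∀ z ∈ D₀, z ∈ A ∧ ∃ x ∈ A, -(G x - H z - DH z (x - z)) ∈ K)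
    (a Lg Lh : ℝ) (ha : 0 < a) (hLg : 0 < Lg) (hLh : 0 < Lh)
    (hmain : ∀ z ∈ D₀, ∀ v ∈ subdiff h₀ z, ‖v‖ ≤ Lh ∧
      ∃ r > (0 : ℝ), ∃ xstar : EuclideanSpace ℝ (Fin d),
        -- xstar is a globally optimal solution of the non-penalized problem
        ((xstar ∈ A ∧ -(G xstar - H z - DH z (xstar - z)) ∈ K) ∧
          ∀ y, y ∈ A → -(G y - H z - DH z (y - z)) ∈ K →
            g₀ xstar - ⟪v, xstar - z⟫ ≤ g₀ y - ⟪v, y - z⟫) ∧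
        -- g₀ is Lipschitz continuous near xstar with constant Lg
        (∃ ρ > (0 : ℝ), ∀ y₁ ∈ Metric.ball xstar ρ, ∀ y₂ ∈ Metric.ball xstar ρ,
          |g₀ y₁ - g₀ y₂| ≤ Lg * ‖y₁ - y₂‖) ∧
        -- the uniform local error bound
        (∀ x ∈ Metric.closedBall xstar r ∩ A,
          a * Metric.infDist x {x' | x' ∈ A ∧ -(G x' - H z - DH z (x' - z)) ∈ K} ≤
            Metric.infDist (G x - H z - DH z (x - z)) (-K))) :
    ∃ μs : ℝ, 0 ≤ μs ∧ ∀ μ : ℝ, μs ≤ μ → ∀ z ∈ D₀, ∀ v ∈ subdiff h₀ z,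
      -- the penalized problem has a globally optimal solution
      (∃ p : EuclideanSpace ℝ (Fin d) × Y,
        (p.1 ∈ A ∧ p.2 ∈ K ∧ p.2 - (G p.1 - H z - DH z (p.1 - z)) ∈ K) ∧
        ∀ q : EuclideanSpace ℝ (Fin d) × Y,
          q.1 ∈ A → q.2 ∈ K → q.2 - (G q.1 - H z - DH z (q.1 - z)) ∈ K →
          g₀ p.1 - ⟪v, p.1 - z⟫ + μ * t₀ p.2 ≤ g₀ q.1 - ⟪v, q.1 - z⟫ + μ * t₀ q.2) ∧
      -- exactness: (xstar, sstar) solves the penalized problem iff sstar = 0 and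
      -- xstar solves the non-penalized problem
      (∀ (xstar : EuclideanSpace ℝ (Fin d)) (sstar : Y),
        (((xstar ∈ A ∧ sstar ∈ K ∧ sstar - (G xstar - H z - DH z (xstar - z)) ∈ K) ∧
          ∀ q : EuclideanSpace ℝ (Fin d) × Y,
            q.1 ∈ A → q.2 ∈ K → q.2 - (G q.1 - H z - DH z (q.1 - z)) ∈ K →
            g₀ xstar - ⟪v, xstar - z⟫ + μ * t₀ sstar ≤
              g₀ q.1 - ⟪v, q.1 - z⟫ + μ * t₀ q.2) ↔
        (sstar = 0 ∧ (xstar ∈ A ∧ -(G xstar - H z - DH z (xstar - z)) ∈ K) ∧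
          ∀ y, y ∈ A → -(G y - H z - DH z (y - z)) ∈ K →
            g₀ xstar - ⟪v, xstar - z⟫ ≤ g₀ y - ⟪v, y - z⟫))) := by
  obtain ⟨ε, hε, hεK⟩ := my_exists_eps K hKclosed hKcone hKfd t₀ ht₀pos
  have h0K : (0:Y) ∈ K := by
    have h : (0:Y) ∈ K ∩ (-K) := by rw [hKpointed]; rfl
    exact h.1
  have hKadd : ∀ k₁ ∈ K, ∀ k₂ ∈ K, k₁ + k₂ ∈ K := by
    intro k₁ h₁ k₂ h₂
    have hm := hKconvex h₁ h₂ (by norm_num : (0:ℝ) ≤ 1/2) (by norm_num : (0:ℝ) ≤ 1/2)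
      (by norm_num)
    have h2 := hKcone 2 (by norm_num) _ hm
    rwa [show (2:ℝ) • ((1/2:ℝ) • k₁ + (1/2:ℝ) • k₂) = k₁ + k₂ by
      rw [smul_add, smul_smul, smul_smul]; norm_num] at h2
  set μ₀ : ℝ := (Lg + Lh) / (a * ε) with hμ₀def
  have hμ₀ : 0 ≤ μ₀ := div_nonneg (by linarith) (by positivity)
  refine ⟨μ₀ + 1, by linarith, ?_⟩
  intro μ hμ z hz v hv
  obtain ⟨hvLh, r, hr, xh, ⟨⟨hxhA, hxhF⟩, hxhopt⟩, ⟨ρ, hρ, hlip⟩, heb⟩ := hmain z hz v hv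
  have key : ∀ m : ℝ, μ₀ ≤ m → ∀ x ∈ A, ∀ s ∈ K, s - (G x - H z - DH z (x - z)) ∈ K →
      g₀ xh - ⟪v, xh - z⟫ ≤ g₀ x - ⟪v, x - z⟫ + m * t₀ s := by
    intro m hm x hx s hs hsF
    have hm0 : 0 ≤ m := hμ₀.trans hm
    have hβa : Lg + Lh ≤ (m * ε) * a := by
      rw [hμ₀def, div_le_iff₀ (by positivity)] at hm
      nlinarith
    have hΦ : ∀ (x₁ x₂ : EuclideanSpace ℝ (Fin d)) (p : ℝ), 0 ≤ p → p ≤ 1 →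
        p • (G x₁ - H z - DH z (x₁ - z)) + (1 - p) • (G x₂ - H z - DH z (x₂ - z))
          - (G (p • x₁ + (1 - p) • x₂) - H z - DH z ((p • x₁ + (1 - p) • x₂) - z)) ∈ K := by
      intro x₁ x₂ p hp hp1
      have h1 := hG x₁ x₂ p ⟨hp, hp1⟩
      have hcz : (p • x₁ + (1 - p) • x₂) - z = p • (x₁ - z) + (1 - p) • (x₂ - z) := by module
      have h2 : p • (G x₁ - H z - DH z (x₁ - z)) + (1 - p) • (G x₂ - H z - DH z (x₂ - z))
          - (G (p • x₁ + (1 - p) • x₂) - H z - DH z ((p • x₁ + (1 - p) • x₂) - z))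
          = p • G x₁ + (1 - p) • G x₂ - G (p • x₁ + (1 - p) • x₂) := by
        rw [hcz, map_add, map_smul, map_smul]
        module
      rw [h2]
      exact h1
    have hkey : g₀ xh - ⟪v, xh - z⟫ ≤ g₀ x - ⟪v, x - z⟫
        + (m * ε) * Metric.infDist (G x - H z - DH z (x - z)) (-K) :=
      my_key_lemma K hKconvex h0K hKadd (fun x => G x - H z - DH z (x - z)) hΦ g₀ hg₀
        A hAconvex v z a Lg Lh (m * ε) ha hLg hLh (by positivity) hβa hvLh r hr xh
        hxhA hxhF hxhopt ρ hρ hlip heb x hx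
    have hd1 : Metric.infDist (G x - H z - DH z (x - z)) (-K) ≤ ‖s‖ := by
      have hmem : G x - H z - DH z (x - z) - s ∈ -K := Set.mem_neg.2 (by rwa [neg_sub])
      have h : Metric.infDist (G x - H z - DH z (x - z)) (-K)
          ≤ dist (G x - H z - DH z (x - z)) (G x - H z - DH z (x - z) - s) :=
        Metric.infDist_le_dist_of_mem hmem
      rwa [dist_eq_norm, sub_sub_cancel] at h
    have hd2 : ε * ‖s‖ ≤ t₀ s := hεK s hs
    have hd3 : (m * ε) * Metric.infDist (G x - H z - DH z (x - z)) (-K) ≤ m * t₀ s := by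
      calc (m * ε) * Metric.infDist (G x - H z - DH z (x - z)) (-K)
          ≤ (m * ε) * ‖s‖ := mul_le_mul_of_nonneg_left hd1 (by positivity)
        _ = m * (ε * ‖s‖) := by ring
        _ ≤ m * t₀ s := mul_le_mul_of_nonneg_left hd2 hm0
    linarith
  refine ⟨⟨(xh, 0), ⟨hxhA, h0K, by simpa using hxhF⟩, ?_⟩, ?_⟩
  · intro q hq1 hq2 hq3
    have h := key μ (by linarith) q.1 hq1 q.2 hq2 hq3
    simp only [map_zero, mul_zero, add_zero]
    exact h
  · intro xstar sstar
    constructor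
    · rintro ⟨⟨hxA, hsK, hsF⟩, hopt⟩
      have h1 := hopt (xh, 0) hxhA h0K (by simpa using hxhF)
      simp only [map_zero, mul_zero, add_zero] at h1
      have h2 := key (μ - 1) (by linarith) xstar hxA sstar hsK hsF
      have hring : (μ - 1) * t₀ sstar = μ * t₀ sstar - t₀ sstar := by ring
      have hts : t₀ sstar ≤ 0 := by linarith
      have hs0 : sstar = 0 := by
        by_contra hne
        exact absurd hts (not_le.2 (ht₀pos sstar hsK hne))
      subst hs0
      refine ⟨rfl, ⟨hxA, by simpa using hsF⟩, ?_⟩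
      intro y hyA hyF
      have h := hopt (y, 0) hyA h0K (by simpa using hyF)
      simpa only [map_zero, mul_zero, add_zero] using h
    · rintro ⟨hs0, ⟨hxA, hxF⟩, hopt⟩
      subst hs0
      refine ⟨⟨hxA, h0K, by simpa using hxF⟩, ?_⟩
      intro q hq1 hq2 hq3
      have h1 : g₀ xstar - ⟪v, xstar - z⟫ ≤ g₀ xh - ⟪v, xh - z⟫ := hopt xh hxhA hxhF
      have h2 := key μ (by linarith) q.1 hq1 q.2 hq2 hq3
      simp only [map_zero, mul_zero, add_zero]
      linarith
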